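/- Define the outer measure $\mu^*$ on subsets of $\prod_{i\in\mathbb{N}}\Omega_i$ by $\mu^*(A) = \inf\{\sum_{n} \mathrm{vol}(\mathscr{C}_n) : \{\mathscr{C}_n\}$ finite rectangles covering $A\}$ (with $\mu^*(A)=\infty$ if no cover exists). Then every cylinder rectangle $\mathscr{C} = \prod_{i=1}^m \mathscr{C}_i \times \prod_{i=m+1}^\infty \Omega_i$ with $\mathscr{C}_i \in \Sigma_i$ is Carathéodory $\mu^*$-measurable, i.e., $\mu^*(B) \ge \mu^*(B \cap \mathscr{C}) + \mu^*(B \cap \mathscr{C}^c)$ for every subset $B$. -/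

import Mathlib

open MeasureTheory Filter Set
open scoped ENNReal

/-- `HasVol μ C v` says that the rectangle `∏ᵢ Cᵢ` is a *finite rectangle*:
all sides are measurable with finite measure and the infinite product
`∏ᵢ μᵢ(Cᵢ)` converges to the finite value `v ∈ [0,∞)` (its volume). -/
def HasVol {Ω : ℕ → Type*} [∀ i, MeasurableSpace (Ω i)]
    (μ : ∀ i, Measure (Ω i)) (C : ∀ i, Set (Ω i)) (v : ℝ) : Prop :=
  (∀ i, MeasurableSet (C i)) ∧ (∀ i, μ i (C i) ≠ ∞) ∧
    Tendsto (fun m => ∏ i ∈ Finset.range m, (μ i (C i)).toReal) atTop (nhds v)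

/-- The outer measure generated by covers by finite rectangles weighted by their volume;
it takes the value `∞` when no countable cover by finite rectangles exists. -/
noncomputable def outerVol {Ω : ℕ → Type*} [∀ i, MeasurableSpace (Ω i)]
    (μ : ∀ i, Measure (Ω i)) (A : Set (∀ i, Ω i)) : ℝ≥0∞ :=
  ⨅ (D : ℕ → ∀ i, Set (Ω i)) (w : ℕ → ℝ) (_ : ∀ n, HasVol μ (D n) (w n))
    (_ : A ⊆ ⋃ n, Set.univ.pi (D n)), ∑' n, ENNReal.ofReal (w n)

set_option linter.unusedSectionVars false

namespace Stmt9Aux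

variable {Ω : ℕ → Type*} [∀ i, MeasurableSpace (Ω i)] (μ : ∀ i, Measure (Ω i))

def pieceSide (C : ∀ i, Set (Ω i)) (j i : ℕ) : Set (Ω i) :=
  if i < j then C i else if i = j then (C i)ᶜ else Set.univ

lemma pieceSide_meas {C : ∀ i, Set (Ω i)} (hC : ∀ i, MeasurableSet (C i)) (j i : ℕ) :
    MeasurableSet (pieceSide C j i) := by
  unfold pieceSide; split_ifs
  · exact hC i
  · exact (hC i).compl
  · exact MeasurableSet.univ

lemma pieceSide_univ {C : ∀ i, Set (Ω i)} {j i : ℕ} (h : j < i) :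
    pieceSide C j i = Set.univ := by
  unfold pieceSide; rw [if_neg (by omega), if_neg (by omega)]

lemma hasVol_nonneg {A : ∀ i, Set (Ω i)} {v : ℝ} (h : HasVol μ A v) : 0 ≤ v :=
  ge_of_tendsto' h.2.2 fun _ => Finset.prod_nonneg fun _ _ => ENNReal.toReal_nonneg

noncomputable def tailLim (A : ∀ i, Set (Ω i)) (m : ℕ) (v : ℝ) : ℝ :=
  if (∏ i ∈ Finset.range m, (μ i (A i)).toReal) = 0 then 0
  else v / ∏ i ∈ Finset.range m, (μ i (A i)).toReal

lemma hasVol_inter {A : ∀ i, Set (Ω i)} {v : ℝ} (hA : HasVol μ A v)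
    {E : ∀ i, Set (Ω i)} (hE : ∀ i, MeasurableSet (E i)) {m : ℕ}
    (hEu : ∀ i, m ≤ i → E i = Set.univ) :
    HasVol μ (fun i => A i ∩ E i)
      ((∏ i ∈ Finset.range m, (μ i (A i ∩ E i)).toReal) * tailLim μ A m v) := by
  obtain ⟨hAm, hAf, hAt⟩ := hA
  refine ⟨fun i => (hAm i).inter (hE i),
    fun i => ne_top_of_le_ne_top (hAf i) (measure_mono Set.inter_subset_left), ?_⟩
  by_cases hc0 : (∏ i ∈ Finset.range m, (μ i (A i)).toReal) = 0
  · rw [tailLim, if_pos hc0, mul_zero]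
    obtain ⟨k, -, hk0⟩ := Finset.prod_eq_zero_iff.mp hc0
    have hkz : μ k (A k) = 0 := by
      rcases (ENNReal.toReal_eq_zero_iff _).mp hk0 with h | h
      · exact h
      · exact absurd h (hAf k)
    have hbz : μ k (A k ∩ E k) = 0 :=
      le_antisymm (hkz ▸ measure_mono Set.inter_subset_left) zero_le
    refine Tendsto.congr' ?_ tendsto_const_nhds
    filter_upwards [eventually_ge_atTop (k + 1)] with M hM
    exact (Finset.prod_eq_zero (i := k) (Finset.mem_range.mpr (by omega))
      (by rw [hbz, ENNReal.toReal_zero])).symm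
  · rw [tailLim, if_neg hc0]
    have key : Tendsto (fun M => (∏ i ∈ Finset.range m, (μ i (A i ∩ E i)).toReal) *
        ((∏ i ∈ Finset.range M, (μ i (A i)).toReal) /
          (∏ i ∈ Finset.range m, (μ i (A i)).toReal))) atTop
        (nhds ((∏ i ∈ Finset.range m, (μ i (A i ∩ E i)).toReal) *
          (v / (∏ i ∈ Finset.range m, (μ i (A i)).toReal)))) :=
      (hAt.div_const _).const_mul _
    refine Tendsto.congr' ?_ key
    filter_upwards [eventually_ge_atTop m] with M hM
    have h1 : (∏ i ∈ Finset.range m, (μ i (A i ∩ E i)).toReal) *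
        ∏ i ∈ Finset.Ico m M, (μ i (A i ∩ E i)).toReal
        = ∏ i ∈ Finset.range M, (μ i (A i ∩ E i)).toReal :=
      Finset.prod_range_mul_prod_Ico _ hM
    have h2 : (∏ i ∈ Finset.range m, (μ i (A i)).toReal) *
        ∏ i ∈ Finset.Ico m M, (μ i (A i)).toReal
        = ∏ i ∈ Finset.range M, (μ i (A i)).toReal :=
      Finset.prod_range_mul_prod_Ico _ hM
    have h3 : ∏ i ∈ Finset.Ico m M, (μ i (A i ∩ E i)).toReal
        = ∏ i ∈ Finset.Ico m M, (μ i (A i)).toReal :=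
      Finset.prod_congr rfl fun i hi => by
        rw [hEu i (Finset.mem_Ico.mp hi).1, Set.inter_univ]
    rw [← h2, mul_div_cancel_left₀ _ hc0, ← h3, h1]

lemma hasVol_empty {A : ∀ i, Set (Ω i)} (hAm : ∀ i, MeasurableSet (A i))
    (hAf : ∀ i, μ i (A i) ≠ ∞) (k : ℕ) (hk : μ k (A k) = 0) : HasVol μ A 0 := by
  refine ⟨hAm, hAf, ?_⟩
  refine Tendsto.congr' ?_ tendsto_const_nhds
  filter_upwards [eventually_ge_atTop (k + 1)] with M hM
  exact (Finset.prod_eq_zero (i := k) (Finset.mem_range.mpr (by omega))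
    (by rw [hk, ENNReal.toReal_zero])).symm

lemma pieces_sum {A C : ∀ i, Set (Ω i)} (hCm : ∀ i, MeasurableSet (C i))
    (hAf : ∀ i, μ i (A i) ≠ ∞) (m : ℕ) :
    (∏ i ∈ Finset.range m, (μ i (A i ∩ C i)).toReal)
      + ∑ j ∈ Finset.range m, ∏ i ∈ Finset.range m, (μ i (A i ∩ pieceSide C j i)).toReal
      = ∏ i ∈ Finset.range m, (μ i (A i)).toReal := by
  induction m with
  | zero => simp
  | succ m ih =>
    rw [Finset.prod_range_succ, Finset.prod_range_succ, Finset.sum_range_succ]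
    have hsum : ∑ j ∈ Finset.range m,
        ∏ i ∈ Finset.range (m + 1), (μ i (A i ∩ pieceSide C j i)).toReal
        = (∑ j ∈ Finset.range m,
            ∏ i ∈ Finset.range m, (μ i (A i ∩ pieceSide C j i)).toReal)
          * (μ m (A m)).toReal := by
      rw [Finset.sum_mul]
      refine Finset.sum_congr rfl fun j hj => ?_
      rw [Finset.prod_range_succ, pieceSide_univ (Finset.mem_range.mp hj), Set.inter_univ]
    have hlast : ∏ i ∈ Finset.range (m + 1), (μ i (A i ∩ pieceSide C m i)).toReal
        = (∏ i ∈ Finset.range m, (μ i (A i ∩ C i)).toReal)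
          * (μ m (A m ∩ (C m)ᶜ)).toReal := by
      rw [Finset.prod_range_succ]
      congr 1
      · refine Finset.prod_congr rfl fun i hi => ?_
        rw [pieceSide, if_pos (Finset.mem_range.mp hi)]
      · rw [pieceSide, if_neg (lt_irrefl m), if_pos rfl]
    rw [hsum, hlast]
    have hfin1 : μ m (A m ∩ C m) ≠ ∞ :=
      ne_top_of_le_ne_top (hAf m) (measure_mono Set.inter_subset_left)
    have hfin2 : μ m (A m ∩ (C m)ᶜ) ≠ ∞ :=
      ne_top_of_le_ne_top (hAf m) (measure_mono Set.inter_subset_left)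
    have h2 : (μ m (A m ∩ C m)).toReal + (μ m (A m ∩ (C m)ᶜ)).toReal
        = (μ m (A m)).toReal := by
      rw [← ENNReal.toReal_add hfin1 hfin2]
      congr 1
      rw [← Set.diff_eq]
      exact measure_inter_add_diff _ (hCm m)
    linear_combination (μ m (A m)).toReal * ih
      + (∏ i ∈ Finset.range m, (μ i (A i ∩ C i)).toReal) * h2

lemma value_split {A C : ∀ i, Set (Ω i)} {v : ℝ} (hA : HasVol μ A v)
    (hCm : ∀ i, MeasurableSet (C i)) (m : ℕ) :
    v = (∏ i ∈ Finset.range m, (μ i (A i ∩ C i)).toReal) * tailLim μ A m v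
      + ∑ j ∈ Finset.range m,
          (∏ i ∈ Finset.range m, (μ i (A i ∩ pieceSide C j i)).toReal) * tailLim μ A m v := by
  rw [← Finset.sum_mul, ← add_mul, pieces_sum μ hCm hA.2.1 m]
  by_cases hc0 : (∏ i ∈ Finset.range m, (μ i (A i)).toReal) = 0
  · rw [tailLim, if_pos hc0, mul_zero]
    obtain ⟨k, -, hk0⟩ := Finset.prod_eq_zero_iff.mp hc0
    refine tendsto_nhds_unique hA.2.2 ?_
    refine Tendsto.congr' ?_ tendsto_const_nhds
    filter_upwards [eventually_ge_atTop (k + 1)] with M hM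
    exact (Finset.prod_eq_zero (i := k) (Finset.mem_range.mpr (by omega)) hk0).symm
  · rw [tailLim, if_neg hc0, mul_comm, div_mul_cancel₀ _ hc0]

lemma outerVol_le {A : Set (∀ i, Ω i)} (D : ℕ → ∀ i, Set (Ω i)) (w : ℕ → ℝ)
    (h1 : ∀ n, HasVol μ (D n) (w n)) (h2 : A ⊆ ⋃ n, Set.univ.pi (D n)) :
    outerVol μ A ≤ ∑' n, ENNReal.ofReal (w n) :=
  iInf_le_of_le D <| iInf_le_of_le w <| iInf_le_of_le h1 <| iInf_le_of_le h2 le_rfl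

end Stmt9Aux

theorem stmt_9 {Ω : ℕ → Type*} [∀ i, MeasurableSpace (Ω i)] (μ : ∀ i, Measure (Ω i))
    (m : ℕ) (C : ∀ i, Set (Ω i)) (hmeas : ∀ i, MeasurableSet (C i))
    (hcyl : ∀ i, m ≤ i → C i = Set.univ) (B : Set (∀ i, Ω i)) :
    outerVol μ (B ∩ Set.univ.pi C) + outerVol μ (B ∩ (Set.univ.pi C)ᶜ) ≤ outerVol μ B := by
  classical
  show _ ≤ ⨅ (D : ℕ → ∀ i, Set (Ω i)) (w : ℕ → ℝ) (_ : ∀ n, HasVol μ (D n) (w n))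
    (_ : B ⊆ ⋃ n, Set.univ.pi (D n)), ∑' n, ENNReal.ofReal (w n)
  refine le_iInf fun D => le_iInf fun w => le_iInf fun hvol => le_iInf fun hcov => ?_
  set t : ℕ → ℝ := fun n => Stmt9Aux.tailLim μ (D n) m (w n) with ht
  set vC : ℕ → ℝ := fun n =>
    (∏ i ∈ Finset.range m, (μ i (D n i ∩ C i)).toReal) * t n with hvCdef
  set vP : ℕ → ℕ → ℝ := fun n j => if j < m then
    (∏ i ∈ Finset.range m, (μ i (D n i ∩ Stmt9Aux.pieceSide C j i)).toReal) * t n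
    else 0 with hvPdef
  have hvC : ∀ n, HasVol μ (fun i => D n i ∩ C i) (vC n) := fun n =>
    Stmt9Aux.hasVol_inter μ (hvol n) hmeas hcyl
  have hvP : ∀ n j, HasVol μ (fun i => D n i ∩ Stmt9Aux.pieceSide C j i) (vP n j) := by
    intro n j
    by_cases hj : j < m
    · have := Stmt9Aux.hasVol_inter μ (hvol n)
        (Stmt9Aux.pieceSide_meas hmeas j) (m := m)
        (fun i hi => Stmt9Aux.pieceSide_univ (by omega))
      simpa [hvPdef, ht, if_pos hj] using this
    · have hz : μ j (D n j ∩ Stmt9Aux.pieceSide C j j) = 0 := by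
        have he : Stmt9Aux.pieceSide C j j = (∅ : Set (Ω j)) := by
          rw [Stmt9Aux.pieceSide, if_neg (lt_irrefl j), if_pos rfl,
            hcyl j (by omega), Set.compl_univ]
        rw [he, Set.inter_empty, measure_empty]
      have := Stmt9Aux.hasVol_empty μ
        (A := fun i => D n i ∩ Stmt9Aux.pieceSide C j i)
        (fun i => ((hvol n).1 i).inter (Stmt9Aux.pieceSide_meas hmeas j i))
        (fun i => ne_top_of_le_ne_top ((hvol n).2.1 i)
          (measure_mono Set.inter_subset_left)) j hz
      simpa [hvPdef, if_neg hj] using this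
  have hcov1 : B ∩ Set.univ.pi C ⊆ ⋃ n, Set.univ.pi (fun i => D n i ∩ C i) := by
    intro x hx
    obtain ⟨n, hn⟩ := Set.mem_iUnion.mp (hcov hx.1)
    rw [Set.mem_univ_pi] at hn
    exact Set.mem_iUnion.mpr ⟨n, fun i _ => ⟨hn i, hx.2 i (Set.mem_univ i)⟩⟩
  have hcov2 : B ∩ (Set.univ.pi C)ᶜ ⊆ ⋃ k, Set.univ.pi
      (fun i => D (Nat.unpair k).1 i ∩ Stmt9Aux.pieceSide C (Nat.unpair k).2 i) := by
    intro x hx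
    obtain ⟨n, hn⟩ := Set.mem_iUnion.mp (hcov hx.1)
    rw [Set.mem_univ_pi] at hn
    have hne : ∃ i, x i ∉ C i := by
      by_contra h; push_neg at h
      exact hx.2 fun i _ => h i
    refine Set.mem_iUnion.mpr ⟨Nat.pair n (Nat.find hne), ?_⟩
    rw [Set.mem_univ_pi]
    intro i
    rw [Nat.unpair_pair]
    refine ⟨hn i, ?_⟩
    rcases lt_trichotomy i (Nat.find hne) with h1 | h1 | h1
    · rw [Stmt9Aux.pieceSide, if_pos h1]
      exact not_not.mp (Nat.find_min hne h1)
    · rw [Stmt9Aux.pieceSide, if_neg (by omega), if_pos h1]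
      exact h1 ▸ Nat.find_spec hne
    · rw [Stmt9Aux.pieceSide, if_neg (by omega), if_neg (by omega)]
      exact Set.mem_univ _
  have hb1 := Stmt9Aux.outerVol_le μ _ vC hvC hcov1
  have hb2 := Stmt9Aux.outerVol_le μ
    (fun k i => D (Nat.unpair k).1 i ∩ Stmt9Aux.pieceSide C (Nat.unpair k).2 i)
    (fun k => vP (Nat.unpair k).1 (Nat.unpair k).2)
    (fun k => hvP _ _) hcov2
  refine le_trans (add_le_add hb1 hb2) (le_of_eq ?_)
  have hsum2 : ∑' k : ℕ, ENNReal.ofReal (vP (Nat.unpair k).1 (Nat.unpair k).2)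
      = ∑' n, ∑' j, ENNReal.ofReal (vP n j) := by
    rw [← ENNReal.tsum_prod, ← Nat.pairEquiv.tsum_eq
      (f := fun k => ENNReal.ofReal (vP (Nat.unpair k).1 (Nat.unpair k).2))]
    refine tsum_congr fun p => ?_
    show ENNReal.ofReal (vP (Nat.unpair (Nat.pair p.1 p.2)).1 (Nat.unpair (Nat.pair p.1 p.2)).2) = _
    rw [Nat.unpair_pair]
  rw [hsum2, ← ENNReal.tsum_add]
  refine tsum_congr fun n => ?_
  have htsum : ∑' j, ENNReal.ofReal (vP n j)
      = ∑ j ∈ Finset.range m, ENNReal.ofReal (vP n j) := by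
    refine tsum_eq_sum fun j hj => ?_
    have hjm : ¬ j < m := by simpa using hj
    rw [hvPdef]
    simp only [if_neg hjm, ENNReal.ofReal_zero]
  have hC0 : 0 ≤ vC n := Stmt9Aux.hasVol_nonneg μ (hvC n)
  have hP0 : ∀ j, 0 ≤ vP n j := fun j => Stmt9Aux.hasVol_nonneg μ (hvP n j)
  rw [htsum, ← ENNReal.ofReal_sum_of_nonneg (fun j _ => hP0 j),
    ← ENNReal.ofReal_add hC0 (Finset.sum_nonneg fun j _ => hP0 j)]
  congr 1
  rw [Stmt9Aux.value_split μ (hvol n) hmeas m (C := C)]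
  simp only [hvCdef, hvPdef, ht]
  exact congrArg₂ (· + ·) rfl
    (Finset.sum_congr rfl fun j hj => if_pos (Finset.mem_range.mp hj))
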